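/- arXiv:2201.00974 — 5 statements merged into one kernel-verified Lean document; each statement's English description precedes it below -/
import Mathlib

section
/- Let ω ⊂ ℝᵈ be a bounded domain, β > 0, and let φ, ψ be twice continuously differentiable functions on ω satisfying -Δψ + c₀ψ = -βφ and -Δφ + c₀φ = ψ in ω, where c₀ ≥ 0 is a continuous function. Then -Δ(ψ² + βφ²) + c₀(ψ² + βφ²) ≤ 0 pointwise in ω. -/
/-- The Laplacian of `f : ℝᵈ → ℝ`, as the sum of second partial derivatives. -/
noncomputable def lap (d : ℕ) (f : EuclideanSpace ℝ (Fin d) → ℝ)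
    (x : EuclideanSpace ℝ (Fin d)) : ℝ :=
  ∑ i : Fin d,
    fderiv ℝ (fun y => fderiv ℝ f y (EuclideanSpace.single i (1 : ℝ))) x
      (EuclideanSpace.single i (1 : ℝ))

section helper
variable {d : ℕ} {ω : Set (EuclideanSpace ℝ (Fin d))}

lemma second_combo (hω : IsOpen ω) {β : ℝ}
    {φ ψ : EuclideanSpace ℝ (Fin d) → ℝ}
    (hφ : ContDiffOn ℝ 2 φ ω) (hψ : ContDiffOn ℝ 2 ψ ω)
    {x : EuclideanSpace ℝ (Fin d)} (hx : x ∈ ω) (i : Fin d) :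
    fderiv ℝ (fun y => fderiv ℝ (fun z => ψ z ^ 2 + β * φ z ^ 2) y
        (EuclideanSpace.single i (1:ℝ))) x (EuclideanSpace.single i (1:ℝ))
      = 2 * ψ x * fderiv ℝ (fun y => fderiv ℝ ψ y (EuclideanSpace.single i (1:ℝ))) x
            (EuclideanSpace.single i (1:ℝ))
        + 2 * (fderiv ℝ ψ x (EuclideanSpace.single i (1:ℝ))) ^ 2
        + β * (2 * φ x * fderiv ℝ (fun y => fderiv ℝ φ y (EuclideanSpace.single i (1:ℝ))) x
            (EuclideanSpace.single i (1:ℝ))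
          + 2 * (fderiv ℝ φ x (EuclideanSpace.single i (1:ℝ))) ^ 2) := by
  set e := EuclideanSpace.single i (1:ℝ) with he
  have hψd : ∀ y ∈ ω, DifferentiableAt ℝ ψ y := fun y hy =>
    (hψ.contDiffAt (hω.mem_nhds hy)).differentiableAt two_ne_zero
  have hφd : ∀ y ∈ ω, DifferentiableAt ℝ φ y := fun y hy =>
    (hφ.contDiffAt (hω.mem_nhds hy)).differentiableAt two_ne_zero
  -- first derivative identity on ω
  have key : ∀ y ∈ ω, fderiv ℝ (fun z => ψ z ^ 2 + β * φ z ^ 2) y e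
      = 2 * ψ y * fderiv ℝ ψ y e + β * (2 * φ y * fderiv ℝ φ y e) := by
    intro y hy
    have hfe : (fun z => ψ z ^ 2 + β * φ z ^ 2) = fun z => ψ z * ψ z + β * (φ z * φ z) := by
      funext z; ring
    have h1 : HasFDerivAt (fun z => ψ z * ψ z + β * (φ z * φ z))
        ((ψ y • fderiv ℝ ψ y + ψ y • fderiv ℝ ψ y)
          + β • (φ y • fderiv ℝ φ y + φ y • fderiv ℝ φ y)) y :=
      ((hψd y hy).hasFDerivAt.mul (hψd y hy).hasFDerivAt).add
        (((hφd y hy).hasFDerivAt.mul (hφd y hy).hasFDerivAt).const_mul β)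
    rw [hfe, h1.fderiv]
    simp [ContinuousLinearMap.add_apply, ContinuousLinearMap.smul_apply, smul_eq_mul]
    ring
  -- eventual equality near x
  have hev : (fun y => fderiv ℝ (fun z => ψ z ^ 2 + β * φ z ^ 2) y e)
      =ᶠ[nhds x] (fun y => 2 * ψ y * fderiv ℝ ψ y e + β * (2 * φ y * fderiv ℝ φ y e)) := by
    filter_upwards [hω.mem_nhds hx] with y hy using key y hy
  rw [hev.fderiv_eq]
  -- differentiate the RHS
  have hψ2 : ContDiffAt ℝ 1 (fderiv ℝ ψ) x :=
    (hψ.contDiffAt (hω.mem_nhds hx)).fderiv_right (le_refl 2)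
  have hφ2 : ContDiffAt ℝ 1 (fderiv ℝ φ) x :=
    (hφ.contDiffAt (hω.mem_nhds hx)).fderiv_right (le_refl 2)
  have hgψ : DifferentiableAt ℝ (fun y => fderiv ℝ ψ y e) x := by
    exact ((ContinuousLinearMap.apply ℝ ℝ e).differentiableAt).comp x
      (hψ2.differentiableAt one_ne_zero)
  have hgφ : DifferentiableAt ℝ (fun y => fderiv ℝ φ y e) x := by
    exact ((ContinuousLinearMap.apply ℝ ℝ e).differentiableAt).comp x
      (hφ2.differentiableAt one_ne_zero)
  have hΨ := (hψd x hx).hasFDerivAt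
  have hΦ := (hφd x hx).hasFDerivAt
  have hG : HasFDerivAt (fun y => 2 * ψ y * fderiv ℝ ψ y e + β * (2 * φ y * fderiv ℝ φ y e))
      ((((2 * ψ x) • fderiv ℝ (fun y => fderiv ℝ ψ y e) x
          + fderiv ℝ ψ x e • ((2:ℝ) • fderiv ℝ ψ x)))
        + β • (((2 * φ x) • fderiv ℝ (fun y => fderiv ℝ φ y e) x
          + fderiv ℝ φ x e • ((2:ℝ) • fderiv ℝ φ x)))) x := by
    exact (((hΨ.const_mul 2).mul hgψ.hasFDerivAt).add
      (((hΦ.const_mul 2).mul hgφ.hasFDerivAt).const_mul β))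
  rw [hG.fderiv]
  simp [ContinuousLinearMap.add_apply, ContinuousLinearMap.smul_apply, smul_eq_mul]
  ring
end helper

/-- Special case of Lemma 3.1 with `𝓛 = -Δ + c₀`: if `-Δψ + c₀ψ = -βφ` and
`-Δφ + c₀φ = ψ` on a bounded domain `ω`, then `-Δ(ψ² + βφ²) + c₀(ψ² + βφ²) ≤ 0` in `ω`. -/
theorem stmt_0 (d : ℕ) (ω : Set (EuclideanSpace ℝ (Fin d)))
    (hω_open : IsOpen ω) (hω_bdd : Bornology.IsBounded ω)
    (β : ℝ) (hβ : 0 < β)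
    (c₀ φ ψ : EuclideanSpace ℝ (Fin d) → ℝ)
    (hc₀_cont : ContinuousOn c₀ ω) (hc₀_nonneg : ∀ x ∈ ω, 0 ≤ c₀ x)
    (hφ : ContDiffOn ℝ 2 φ ω) (hψ : ContDiffOn ℝ 2 ψ ω)
    (heq1 : ∀ x ∈ ω, -lap d ψ x + c₀ x * ψ x = -β * φ x)
    (heq2 : ∀ x ∈ ω, -lap d φ x + c₀ x * φ x = ψ x) :
    ∀ x ∈ ω,
      -lap d (fun y => (ψ y) ^ 2 + β * (φ y) ^ 2) x
        + c₀ x * ((ψ x) ^ 2 + β * (φ x) ^ 2) ≤ 0 := by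
  intro x hx
  have hlap : lap d (fun y => (ψ y) ^ 2 + β * (φ y) ^ 2) x
      = 2 * ψ x * lap d ψ x + 2 * ∑ i : Fin d, (fderiv ℝ ψ x (EuclideanSpace.single i (1:ℝ)))^2
        + β * (2 * φ x * lap d φ x
          + 2 * ∑ i : Fin d, (fderiv ℝ φ x (EuclideanSpace.single i (1:ℝ)))^2) := by
    unfold lap
    rw [Finset.sum_congr rfl (fun i _ => second_combo hω_open hφ hψ hx i)]
    simp only [Finset.sum_add_distrib, ← Finset.mul_sum]
  have hS : (0:ℝ) ≤ ∑ i : Fin d, (fderiv ℝ ψ x (EuclideanSpace.single i (1:ℝ)))^2 :=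
    Finset.sum_nonneg fun i _ => sq_nonneg _
  have hT : (0:ℝ) ≤ ∑ i : Fin d, (fderiv ℝ φ x (EuclideanSpace.single i (1:ℝ)))^2 :=
    Finset.sum_nonneg fun i _ => sq_nonneg _
  have h1 := heq1 x hx
  have h2 := heq2 x hx
  have hc := hc₀_nonneg x hx
  have e1 : lap d ψ x = c₀ x * ψ x + β * φ x := by linarith
  have e2 : lap d φ x = c₀ x * φ x - ψ x := by linarith
  rw [hlap, e1, e2]
  nlinarith [sq_nonneg (ψ x), sq_nonneg (φ x), mul_nonneg hc (sq_nonneg (ψ x)),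
    mul_nonneg hc (sq_nonneg (φ x)), hβ.le, mul_nonneg hβ.le hT,
    mul_nonneg hc (mul_nonneg hβ.le (sq_nonneg (φ x)))]
end

section
/- Let 𝓛_h be the five-point finite difference Laplacian on the uniform grid of (0,1)² with mesh size h = 1/N, let β > 0, and let grid functions Φ, Ψ satisfy (𝓛_h Ψ)_{i,j} = -β Φ_{i,j} and (𝓛_h Φ)_{i,j} = Ψ_{i,j} at all interior indices 1 ≤ i,j ≤ N-1. Then (𝓛_h(Ψ² + βΦ²))_{i,j} ≤ 0 at all interior indices, where squares are taken componentwise. -/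
/-- The five-point finite difference Laplacian on the uniform grid of `(0,1)²`
with mesh size `h = 1/N`, evaluated at interior indices `1 ≤ i, j ≤ N-1`. -/
noncomputable def Lh (N : ℕ) (z : ℕ → ℕ → ℝ) (i j : ℕ) : ℝ :=
  -((z (i - 1) j + z (i + 1) j - 4 * z i j + z i (j - 1) + z i (j + 1)) /
      ((1 / (N : ℝ)) ^ 2))

/-- Lemma 4.2: if `𝓛_h Ψ = -β Φ` and `𝓛_h Φ = Ψ` at all interior indices,
then `𝓛_h(Ψ² + βΦ²) ≤ 0` at all interior indices. -/
theorem stmt_2 (N : ℕ) (hN : 2 ≤ N) (β : ℝ) (hβ : 0 < β) (Φ Ψ : ℕ → ℕ → ℝ)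
    (h1 : ∀ i j : ℕ, 1 ≤ i → i ≤ N - 1 → 1 ≤ j → j ≤ N - 1 →
      Lh N Ψ i j = -β * Φ i j)
    (h2 : ∀ i j : ℕ, 1 ≤ i → i ≤ N - 1 → 1 ≤ j → j ≤ N - 1 →
      Lh N Φ i j = Ψ i j) :
    ∀ i j : ℕ, 1 ≤ i → i ≤ N - 1 → 1 ≤ j → j ≤ N - 1 →
      Lh N (fun a b => (Ψ a b) ^ 2 + β * (Φ a b) ^ 2) i j ≤ 0 := by
  intro i j hi hi' hj hj'
  have hNpos : (0:ℝ) < (N:ℝ) := by positivity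
  have hh : (0:ℝ) < (1 / (N:ℝ)) ^ 2 := by positivity
  have e1 := h1 i j hi hi' hj hj'
  have e2 := h2 i j hi hi' hj hj'
  unfold Lh at e1 e2 ⊢
  simp only [neg_div] at e1 e2 ⊢
  rw [neg_eq_iff_eq_neg, div_eq_iff hh.ne'] at e1 e2
  rw [neg_nonpos, le_div_iff₀ hh]
  have p1 := congrArg (fun t => 2 * Ψ i j * t) e1
  have p2 := congrArg (fun t => 2 * β * Φ i j * t) e2
  nlinarith [p1, p2, sq_nonneg (Ψ (i-1) j - Ψ i j), sq_nonneg (Ψ (i+1) j - Ψ i j),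
    sq_nonneg (Ψ i (j-1) - Ψ i j), sq_nonneg (Ψ i (j+1) - Ψ i j),
    sq_nonneg (Φ (i-1) j - Φ i j), sq_nonneg (Φ (i+1) j - Φ i j),
    sq_nonneg (Φ i (j-1) - Φ i j), sq_nonneg (Φ i (j+1) - Φ i j),
    mul_pos hβ hh]
end

section
/- Fix 0 < r < s < 1 and γ > 0, and define g(z) = sinh²(z) + sin²(z), ρ_c(γ) = [g(γr)·g(γ(1-s))]/[g(γs)·g(γ(1-r))], and ρ_e = [r(1-s)]/[s(1-r)]. Then ρ_c(γ) < ρ_e and ρ_c(γ) < 1. -/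
open Real

private lemma g_hasDeriv (x : ℝ) :
    HasDerivAt (fun z : ℝ => sinh z ^ 2 + sin z ^ 2)
      (2 * sinh x * cosh x + 2 * sin x * cos x) x := by
  have h1 : HasDerivAt (fun z : ℝ => sinh z ^ 2) (2 * sinh x * cosh x) x := by
    have := ((Real.hasDerivAt_sinh x).fun_pow 2)
    simpa [mul_comm, mul_assoc, mul_left_comm] using this
  have h2 : HasDerivAt (fun z : ℝ => sin z ^ 2) (2 * sin x * cos x) x := by
    have := ((Real.hasDerivAt_sin x).fun_pow 2)
    simpa [mul_comm, mul_assoc, mul_left_comm] using this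
  exact h1.add h2

private lemma g1_hasDeriv (x : ℝ) :
    HasDerivAt (fun z : ℝ => 2 * sinh z * cosh z + 2 * sin z * cos z)
      (2 * (cosh x ^ 2 + sinh x ^ 2) + 2 * (cos x ^ 2 - sin x ^ 2)) x := by
  have h1 : HasDerivAt (fun z : ℝ => 2 * sinh z * cosh z)
      (2 * (cosh x ^ 2 + sinh x ^ 2)) x := by
    have := ((Real.hasDerivAt_sinh x).const_mul 2).fun_mul (Real.hasDerivAt_cosh x)
    refine this.congr_deriv ?_
    ring
  have h2 : HasDerivAt (fun z : ℝ => 2 * sin z * cos z)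
      (2 * (cos x ^ 2 - sin x ^ 2)) x := by
    have := ((Real.hasDerivAt_sin x).const_mul 2).fun_mul (Real.hasDerivAt_cos x)
    refine this.congr_deriv ?_
    ring
  exact h1.add h2

private lemma g_strictConvex :
    StrictConvexOn ℝ Set.univ (fun z : ℝ => sinh z ^ 2 + sin z ^ 2) := by
  apply strictConvexOn_univ_of_deriv2_pos
  · exact ((Real.continuous_sinh.pow 2).add (Real.continuous_sin.pow 2))
  · intro x
    have hd1 : deriv (fun z : ℝ => sinh z ^ 2 + sin z ^ 2)
        = fun z : ℝ => 2 * sinh z * cosh z + 2 * sin z * cos z := by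
      funext z; exact (g_hasDeriv z).deriv
    rw [Function.iterate_succ, Function.iterate_one, Function.comp_apply, hd1,
      (g1_hasDeriv x).deriv]
    have hsin : sin x ^ 2 ≤ 1 := sin_sq_le_one x
    rcases eq_or_ne x 0 with rfl | hx
    · simp
    · have hsh : 0 < sinh x ^ 2 := by
        have : sinh x ≠ 0 := by
          simp [Real.sinh_eq_zero, hx]
        positivity
      have hch : 1 ≤ cosh x ^ 2 := by
        have := Real.one_le_cosh x
        nlinarith
      nlinarith

private lemma key {a b : ℝ} (ha : 0 < a) (hab : a < b) :
    b * (sinh a ^ 2 + sin a ^ 2) < a * (sinh b ^ 2 + sin b ^ 2) := by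
  have hb : 0 < b := ha.trans hab
  have ht : 0 < a / b := div_pos ha hb
  have ht1 : 0 < 1 - a / b := by
    have : a / b < 1 := (div_lt_one hb).2 hab
    linarith
  have := g_strictConvex.2 (Set.mem_univ (0 : ℝ)) (Set.mem_univ b)
    hb.ne ht1 ht (by ring)
  simp only [smul_eq_mul, mul_zero, zero_add, Real.sinh_zero, Real.sin_zero,
    div_mul_cancel₀ a hb.ne'] at this
  have h2 : sinh a ^ 2 + sin a ^ 2 < a / b * (sinh b ^ 2 + sin b ^ 2) := by
    nlinarith [this]
  calc b * (sinh a ^ 2 + sin a ^ 2) < b * (a / b * (sinh b ^ 2 + sin b ^ 2)) := by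
        exact mul_lt_mul_of_pos_left h2 hb
    _ = a * (sinh b ^ 2 + sin b ^ 2) := by field_simp

private lemma g_pos {x : ℝ} (hx : 0 < x) : 0 < sinh x ^ 2 + sin x ^ 2 := by
  have : sinh x ≠ 0 := by simp [Real.sinh_eq_zero, hx.ne']
  positivity

/-- With `g(z) = sinh²z + sin²z`, `ρ_c(γ) = g(γr)g(γ(1-s))/(g(γs)g(γ(1-r)))`
and `ρ_e = r(1-s)/(s(1-r))`, for `0 < r < s < 1` and `γ > 0` one has
`ρ_c(γ) < ρ_e` and `ρ_c(γ) < 1`. -/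
theorem stmt_8 (r s γ : ℝ) (hr : 0 < r) (hrs : r < s) (hs : s < 1) (hγ : 0 < γ) :
    (((sinh (γ * r)) ^ 2 + (sin (γ * r)) ^ 2) *
        ((sinh (γ * (1 - s))) ^ 2 + (sin (γ * (1 - s))) ^ 2)) /
      (((sinh (γ * s)) ^ 2 + (sin (γ * s)) ^ 2) *
        ((sinh (γ * (1 - r))) ^ 2 + (sin (γ * (1 - r))) ^ 2)) <
      (r * (1 - s)) / (s * (1 - r)) ∧
    (((sinh (γ * r)) ^ 2 + (sin (γ * r)) ^ 2) *
        ((sinh (γ * (1 - s))) ^ 2 + (sin (γ * (1 - s))) ^ 2)) /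
      (((sinh (γ * s)) ^ 2 + (sin (γ * s)) ^ 2) *
        ((sinh (γ * (1 - r))) ^ 2 + (sin (γ * (1 - r))) ^ 2)) < 1 := by
  have hs0 : 0 < s := hr.trans hrs
  have h1s : 0 < 1 - s := by linarith
  have h1r : 0 < 1 - r := by linarith
  set A := sinh (γ * r) ^ 2 + sin (γ * r) ^ 2 with hA
  set B := sinh (γ * (1 - s)) ^ 2 + sin (γ * (1 - s)) ^ 2 with hB
  set C := sinh (γ * s) ^ 2 + sin (γ * s) ^ 2 with hC
  set D := sinh (γ * (1 - r)) ^ 2 + sin (γ * (1 - r)) ^ 2 with hD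
  have hApos : 0 < A := g_pos (by positivity)
  have hBpos : 0 < B := g_pos (by positivity)
  have hCpos : 0 < C := g_pos (by positivity)
  have hDpos : 0 < D := g_pos (by positivity)
  have k1 : γ * s * A < γ * r * C := key (by positivity) (by nlinarith)
  have k2 : γ * (1 - r) * B < γ * (1 - s) * D := key (by positivity) (by nlinarith)
  have k1' : s * A < r * C := by nlinarith
  have k2' : (1 - r) * B < (1 - s) * D := by nlinarith
  have hmain : A * B / (C * D) < r * (1 - s) / (s * (1 - r)) := by
    rw [div_lt_div_iff₀ (by positivity) (by positivity)]
    nlinarith [mul_pos hApos hBpos, mul_pos hCpos hDpos,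
      mul_lt_mul_of_pos_left k2' (mul_pos hr hCpos),
      mul_lt_mul_of_pos_right k1' (mul_pos h1r hBpos)]
  refine ⟨hmain, hmain.trans_le ?_⟩
  rw [div_le_one (by positivity)]
  nlinarith
end

section
/- Let 0 < r < s < 1 and consider the boundary value problem -e_y'' = -α⁻¹ e_p, -e_p'' = e_y on (0,s) with e_y(0) = e_p(0) = 0 and prescribed values e_y(s) = a, e_p(s) = b. Set γ = (√2/2)α^{-1/4} and q₁(x) = sinh(γ(s-x))sin(γ(s+x)) - sin(γ(s-x))sinh(γ(s+x)), q₂(x) = cosh(γ(s-x))cos(γ(s+x)) - cos(γ(s-x))cosh(γ(s+x)), q₃ = cosh(2γs) - cos(2γs). Then the functions e_y(x) = -(q₂(x)a - 2γ²q₁(x)b)/q₃ and e_p(x) = -(q₁(x)a + 2γ²q₂(x)b)/(2γ²q₃) satisfy the system and the boundary conditions. -/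
open Real

/-- Verification of the explicit solution formulas of Appendix A for the
coupled 1D error system `-e_y'' = -α⁻¹ e_p`, `-e_p'' = e_y` on `(0,s)` with
`e_y(0) = e_p(0) = 0`, `e_y(s) = a`, `e_p(s) = b`, where `γ = (√2/2)α^{-1/4}`. -/
theorem stmt_14 (r s α a b γ : ℝ) (hr : 0 < r) (hrs : r < s) (hs : s < 1)
    (hα : 0 < α) (hγ : γ = Real.sqrt 2 / 2 * α ^ (-(1 : ℝ) / 4))
    (q1 q2 : ℝ → ℝ) (q3 : ℝ)
    (hq1 : ∀ x, q1 x = sinh (γ * (s - x)) * sin (γ * (s + x)) -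
        sin (γ * (s - x)) * sinh (γ * (s + x)))
    (hq2 : ∀ x, q2 x = cosh (γ * (s - x)) * cos (γ * (s + x)) -
        cos (γ * (s - x)) * cosh (γ * (s + x)))
    (hq3 : q3 = cosh (2 * γ * s) - cos (2 * γ * s))
    (ey ep : ℝ → ℝ)
    (hey : ∀ x, ey x = -((q2 x * a - 2 * γ ^ 2 * q1 x * b) / q3))
    (hep : ∀ x, ep x = -((q1 x * a + 2 * γ ^ 2 * q2 x * b) / (2 * γ ^ 2 * q3))) :
    ey 0 = 0 ∧ ep 0 = 0 ∧ ey s = a ∧ ep s = b ∧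
    (∀ x ∈ Set.Ioo 0 s,
      -(deriv (deriv ey) x) = -α⁻¹ * ep x ∧ -(deriv (deriv ep) x) = ey x) := by
  have hs0 : 0 < s := hr.trans hrs
  have hγpos : 0 < γ := by
    rw [hγ]
    positivity
  have hγne : γ ≠ 0 := ne_of_gt hγpos
  -- key identity 4 γ^4 = α⁻¹
  have h4 : 4 * γ ^ 4 = α⁻¹ := by
    have h2 : Real.sqrt 2 ^ 2 = 2 := Real.sq_sqrt (by norm_num)
    have hrp : (α ^ (-(1 : ℝ) / 4)) ^ (4 : ℕ) = α⁻¹ := by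
      rw [← Real.rpow_natCast (α ^ (-(1 : ℝ) / 4)) 4, ← Real.rpow_mul hα.le]
      norm_num [Real.rpow_neg_one]
    rw [hγ]
    have : (Real.sqrt 2 / 2 * α ^ (-(1 : ℝ) / 4)) ^ 4
        = (Real.sqrt 2 ^ 2) ^ 2 / 16 * (α ^ (-(1 : ℝ) / 4)) ^ (4 : ℕ) := by ring
    rw [this, h2, hrp]; ring
  have hq3pos : 0 < q3 := by
    rw [hq3]
    have h1 : Real.cos (2 * γ * s) ≤ 1 := Real.cos_le_one _
    have h2 : 1 < Real.cosh (2 * γ * s) := by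
      rw [Real.one_lt_cosh]
      positivity
    linarith
  have hq3ne : q3 ≠ 0 := ne_of_gt hq3pos
  -- boundary values of q1, q2
  have hq10 : q1 0 = 0 := by rw [hq1]; simp [mul_comm]
  have hq20 : q2 0 = 0 := by rw [hq2]; simp [mul_comm]
  have hq1s : q1 s = 0 := by rw [hq1]; simp
  have hq2s : q2 s = -q3 := by
    rw [hq2, hq3]
    have h : γ * (s + s) = 2 * γ * s := by ring
    simp [h]
  refine ⟨?_, ?_, ?_, ?_, ?_⟩
  · rw [hey 0, hq10, hq20]; simp
  · rw [hep 0, hq10, hq20]; simp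
  · rw [hey s, hq1s, hq2s]; field_simp; ring
  · rw [hep s, hq1s, hq2s]; field_simp; ring
  · -- derivatives
    have hu : ∀ x : ℝ, HasDerivAt (fun x => γ * (s - x)) (-γ) x := by
      intro x
      simpa using ((hasDerivAt_id x).const_sub s).const_mul γ
    have hv : ∀ x : ℝ, HasDerivAt (fun x => γ * (s + x)) γ x := by
      intro x
      simpa using ((hasDerivAt_id x).const_add s).const_mul γ
    -- first derivatives of q1, q2
    have hQ1 : ∀ x : ℝ, HasDerivAt q1
        (γ * (sinh (γ * (s - x)) * cos (γ * (s + x)) - cosh (γ * (s - x)) * sin (γ * (s + x))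
          + cos (γ * (s - x)) * sinh (γ * (s + x)) - sin (γ * (s - x)) * cosh (γ * (s + x)))) x := by
      intro x
      have h := (((hu x).sinh.mul (hv x).sin).sub ((hu x).sin.mul (hv x).sinh))
      rw [funext hq1]
      refine h.congr_deriv ?_
      ring
    have hQ2 : ∀ x : ℝ, HasDerivAt q2
        (-γ * (sinh (γ * (s - x)) * cos (γ * (s + x)) + cosh (γ * (s - x)) * sin (γ * (s + x))
          + sin (γ * (s - x)) * cosh (γ * (s + x)) + cos (γ * (s - x)) * sinh (γ * (s + x)))) x := by
      intro x
      have h := (((hu x).cosh.mul (hv x).cos).sub ((hu x).cos.mul (hv x).cosh))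
      rw [funext hq2]
      refine h.congr_deriv ?_
      ring
    -- second derivatives
    have hD1 : ∀ x : ℝ, HasDerivAt (fun x => γ * (sinh (γ * (s - x)) * cos (γ * (s + x))
          - cosh (γ * (s - x)) * sin (γ * (s + x))
          + cos (γ * (s - x)) * sinh (γ * (s + x)) - sin (γ * (s - x)) * cosh (γ * (s + x))))
        (-(2 * γ ^ 2) * q2 x) x := by
      intro x
      have h := (((((hu x).sinh.mul (hv x).cos).sub ((hu x).cosh.mul (hv x).sin)).add
        ((hu x).cos.mul (hv x).sinh)).sub ((hu x).sin.mul (hv x).cosh)).const_mul γ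
      refine h.congr_deriv ?_
      rw [hq2]
      ring
    have hD2 : ∀ x : ℝ, HasDerivAt (fun x => -γ * (sinh (γ * (s - x)) * cos (γ * (s + x))
          + cosh (γ * (s - x)) * sin (γ * (s + x))
          + sin (γ * (s - x)) * cosh (γ * (s + x)) + cos (γ * (s - x)) * sinh (γ * (s + x))))
        (2 * γ ^ 2 * q1 x) x := by
      intro x
      have h := (((((hu x).sinh.mul (hv x).cos).add ((hu x).cosh.mul (hv x).sin)).add
        ((hu x).sin.mul (hv x).cosh)).add ((hu x).cos.mul (hv x).sinh)).const_mul (-γ)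
      refine h.congr_deriv ?_
      rw [hq1]
      ring
    -- first derivative of ey and ep
    have hEy : ∀ x : ℝ, HasDerivAt ey
        (-(((-γ * (sinh (γ * (s - x)) * cos (γ * (s + x)) + cosh (γ * (s - x)) * sin (γ * (s + x))
          + sin (γ * (s - x)) * cosh (γ * (s + x)) + cos (γ * (s - x)) * sinh (γ * (s + x)))) * a
          - 2 * γ ^ 2 * (γ * (sinh (γ * (s - x)) * cos (γ * (s + x))
          - cosh (γ * (s - x)) * sin (γ * (s + x))
          + cos (γ * (s - x)) * sinh (γ * (s + x)) - sin (γ * (s - x)) * cosh (γ * (s + x)))) * b)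
          / q3)) x := by
      intro x
      rw [funext hey]
      exact ((((hQ2 x).mul_const a).sub (((hQ1 x).const_mul (2 * γ ^ 2)).mul_const b)).div_const
        q3).neg
    have hEp : ∀ x : ℝ, HasDerivAt ep
        (-(((γ * (sinh (γ * (s - x)) * cos (γ * (s + x)) - cosh (γ * (s - x)) * sin (γ * (s + x))
          + cos (γ * (s - x)) * sinh (γ * (s + x)) - sin (γ * (s - x)) * cosh (γ * (s + x)))) * a
          + 2 * γ ^ 2 * (-γ * (sinh (γ * (s - x)) * cos (γ * (s + x))
          + cosh (γ * (s - x)) * sin (γ * (s + x))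
          + sin (γ * (s - x)) * cosh (γ * (s + x)) + cos (γ * (s - x)) * sinh (γ * (s + x)))) * b)
          / (2 * γ ^ 2 * q3))) x := by
      intro x
      rw [funext hep]
      exact ((((hQ1 x).mul_const a).add (((hQ2 x).const_mul (2 * γ ^ 2)).mul_const b)).div_const
        (2 * γ ^ 2 * q3)).neg
    have hdey : deriv ey = fun x =>
        -(((-γ * (sinh (γ * (s - x)) * cos (γ * (s + x)) + cosh (γ * (s - x)) * sin (γ * (s + x))
          + sin (γ * (s - x)) * cosh (γ * (s + x)) + cos (γ * (s - x)) * sinh (γ * (s + x)))) * a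
          - 2 * γ ^ 2 * (γ * (sinh (γ * (s - x)) * cos (γ * (s + x))
          - cosh (γ * (s - x)) * sin (γ * (s + x))
          + cos (γ * (s - x)) * sinh (γ * (s + x)) - sin (γ * (s - x)) * cosh (γ * (s + x)))) * b)
          / q3) := funext fun x => (hEy x).deriv
    have hdep : deriv ep = fun x =>
        -(((γ * (sinh (γ * (s - x)) * cos (γ * (s + x)) - cosh (γ * (s - x)) * sin (γ * (s + x))
          + cos (γ * (s - x)) * sinh (γ * (s + x)) - sin (γ * (s - x)) * cosh (γ * (s + x)))) * a
          + 2 * γ ^ 2 * (-γ * (sinh (γ * (s - x)) * cos (γ * (s + x))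
          + cosh (γ * (s - x)) * sin (γ * (s + x))
          + sin (γ * (s - x)) * cosh (γ * (s + x)) + cos (γ * (s - x)) * sinh (γ * (s + x)))) * b)
          / (2 * γ ^ 2 * q3)) := funext fun x => (hEp x).deriv
    have hEy2 : ∀ x : ℝ, HasDerivAt (deriv ey)
        (-((2 * γ ^ 2 * q1 x * a - 2 * γ ^ 2 * (-(2 * γ ^ 2) * q2 x) * b) / q3)) x := by
      intro x
      rw [hdey]
      exact ((((hD2 x).mul_const a).sub (((hD1 x).const_mul (2 * γ ^ 2)).mul_const b)).div_const
        q3).neg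
    have hEp2 : ∀ x : ℝ, HasDerivAt (deriv ep)
        (-((-(2 * γ ^ 2) * q2 x * a + 2 * γ ^ 2 * (2 * γ ^ 2 * q1 x) * b) / (2 * γ ^ 2 * q3))) x := by
      intro x
      rw [hdep]
      exact ((((hD1 x).mul_const a).add (((hD2 x).const_mul (2 * γ ^ 2)).mul_const b)).div_const
        (2 * γ ^ 2 * q3)).neg
    intro x _
    constructor
    · rw [(hEy2 x).deriv, hep x, ← h4]
      field_simp
      ring
    · rw [(hEp2 x).deriv, hey x]
      field_simp
      ring
end

section
/- Let 0 < r < s < 1 and γ > 0 and define ρ_c(γ) = [g(γr)g(γ(1-s))]/[g(γs)g(γ(1-r))] with g(z) = sinh²z + sin²z. Then ρ_c(γ) ≤ ρ_e², where ρ_e = [r(1-s)]/[s(1-r)]. -/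
open Real

private lemma LA : ∀ t : ℝ, 0 ≤ t → Real.sinh t + Real.sin t ≤ t * (Real.cosh t + Real.cos t) := by
  have hd : ∀ t : ℝ, HasDerivAt (fun t => t * (Real.cosh t + Real.cos t) - (Real.sinh t + Real.sin t))
      (t * (Real.sinh t - Real.sin t)) t := by
    intro t
    have h := ((hasDerivAt_id t).mul ((Real.hasDerivAt_cosh t).add (Real.hasDerivAt_cos t))).sub
      ((Real.hasDerivAt_sinh t).add (Real.hasDerivAt_sin t))
    refine h.congr_deriv ?_
    simp only [Pi.add_apply, Pi.sub_apply, id_eq]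
    ring
  have mono : MonotoneOn (fun t => t * (Real.cosh t + Real.cos t) - (Real.sinh t + Real.sin t)) (Set.Ici 0) := by
    apply monotoneOn_of_deriv_nonneg (convex_Ici 0)
    · exact Continuous.continuousOn (by continuity)
    · intro x hx
      exact (hd x).differentiableAt.differentiableWithinAt
    · intro x hx
      rw [interior_Ici] at hx
      rw [(hd x).deriv]
      have h1 : Real.sin x ≤ x := Real.sin_le (le_of_lt hx)
      have h2 : x < Real.sinh x := Real.self_lt_sinh_iff.mpr hx
      have : (0:ℝ) ≤ x := le_of_lt hx
      nlinarith
  intro t ht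
  have := mono (Set.self_mem_Ici) (Set.mem_Ici.mpr ht) ht
  simp at this
  linarith

private lemma LB : ∀ t : ℝ, 0 ≤ t → 2 * (Real.cosh t - Real.cos t) ≤ t * (Real.sinh t + Real.sin t) := by
  have hd : ∀ t : ℝ, HasDerivAt (fun t => t * (Real.sinh t + Real.sin t) - 2 * (Real.cosh t - Real.cos t))
      (t * (Real.cosh t + Real.cos t) - (Real.sinh t + Real.sin t)) t := by
    intro t
    have h := ((hasDerivAt_id t).mul ((Real.hasDerivAt_sinh t).add (Real.hasDerivAt_sin t))).sub
      (((Real.hasDerivAt_cosh t).sub (Real.hasDerivAt_cos t)).const_mul 2)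
    refine h.congr_deriv ?_
    simp only [Pi.add_apply, Pi.sub_apply, id_eq]
    ring
  have mono : MonotoneOn (fun t => t * (Real.sinh t + Real.sin t) - 2 * (Real.cosh t - Real.cos t)) (Set.Ici 0) := by
    apply monotoneOn_of_deriv_nonneg (convex_Ici 0)
    · exact Continuous.continuousOn (by continuity)
    · intro x hx
      exact (hd x).differentiableAt.differentiableWithinAt
    · intro x hx
      rw [interior_Ici] at hx
      rw [(hd x).deriv]
      have := LA x (le_of_lt hx)
      linarith
  intro t ht
  have := mono (Set.self_mem_Ici) (Set.mem_Ici.mpr ht) ht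
  simp at this
  linarith

/-- monotonicity of `g(z)/z²` : for `0 < a ≤ b`, `g(a)·b² ≤ g(b)·a²`. -/
private lemma L3 {a b : ℝ} (ha : 0 < a) (hab : a ≤ b) :
    (Real.sinh a ^ 2 + Real.sin a ^ 2) * b ^ 2 ≤ (Real.sinh b ^ 2 + Real.sin b ^ 2) * a ^ 2 := by
  set f : ℝ → ℝ := fun z => (Real.sinh z ^ 2 + Real.sin z ^ 2) / z ^ 2 with hf
  have hd : ∀ x : ℝ, x ≠ 0 → HasDerivAt f
      (((2 * Real.sinh x * Real.cosh x + 2 * Real.sin x * Real.cos x) * x ^ 2 -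
        (Real.sinh x ^ 2 + Real.sin x ^ 2) * (2 * x)) / (x ^ 2) ^ 2) x := by
    intro x hx
    have hN : HasDerivAt (fun z => Real.sinh z ^ 2 + Real.sin z ^ 2)
        (2 * Real.sinh x * Real.cosh x + 2 * Real.sin x * Real.cos x) x := by
      have h := (((Real.hasDerivAt_sinh x).pow 2).add ((Real.hasDerivAt_sin x).pow 2))
      refine h.congr_deriv ?_
      push_cast
      ring
    have hD : HasDerivAt (fun z : ℝ => z ^ 2) (2 * x) x := by
      simpa using hasDerivAt_pow 2 x
    have := hN.div hD (pow_ne_zero 2 hx)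
    exact this
  have mono : MonotoneOn f (Set.Ioi 0) := by
    apply monotoneOn_of_deriv_nonneg (convex_Ioi 0)
    · apply ContinuousOn.div
      · exact Continuous.continuousOn (by continuity)
      · exact Continuous.continuousOn (by continuity)
      · intro x hx
        exact pow_ne_zero 2 (ne_of_gt hx)
    · intro x hx
      rw [interior_Ioi] at hx
      exact (hd x (ne_of_gt hx)).differentiableAt.differentiableWithinAt
    · intro x hx
      rw [interior_Ioi] at hx
      rw [(hd x (ne_of_gt hx)).deriv]
      apply div_nonneg _ (sq_nonneg _)
      have hx' : (0:ℝ) < x := hx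
      have hb := LB (2 * x) (by linarith)
      rw [Real.sinh_two_mul, Real.sin_two_mul, Real.cosh_two_mul, Real.cos_two_mul] at hb
      have h1 : Real.cosh x ^ 2 = Real.sinh x ^ 2 + 1 := Real.cosh_sq x
      have h2 : Real.sin x ^ 2 + Real.cos x ^ 2 = 1 := Real.sin_sq_add_cos_sq x
      nlinarith [hx'.le]
  have hb0 : 0 < b := lt_of_lt_of_le ha hab
  have := mono (Set.mem_Ioi.mpr ha) (Set.mem_Ioi.mpr hb0) hab
  rw [hf] at this
  simp only at this
  rw [div_le_div_iff₀ (by positivity) (by positivity)] at this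
  linarith

private lemma gpos {z : ℝ} (hz : 0 < z) : 0 < Real.sinh z ^ 2 + Real.sin z ^ 2 :=
  add_pos_of_pos_of_nonneg (pow_pos (Real.sinh_pos_iff.mpr hz) 2) (sq_nonneg _)

/-- Estimate (A.11): with `g(z) = sinh²z + sin²z`, for `0 < r < s < 1` and
`γ > 0`, `ρ_c(γ) = g(γr)g(γ(1-s))/(g(γs)g(γ(1-r))) ≤ ρ_e²` with
`ρ_e = r(1-s)/(s(1-r))`. -/
theorem stmt_16 (r s γ : ℝ) (hr : 0 < r) (hrs : r < s) (hs : s < 1) (hγ : 0 < γ) :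
    (((sinh (γ * r)) ^ 2 + (sin (γ * r)) ^ 2) *
        ((sinh (γ * (1 - s))) ^ 2 + (sin (γ * (1 - s))) ^ 2)) /
      (((sinh (γ * s)) ^ 2 + (sin (γ * s)) ^ 2) *
        ((sinh (γ * (1 - r))) ^ 2 + (sin (γ * (1 - r))) ^ 2)) ≤
      ((r * (1 - s)) / (s * (1 - r))) ^ 2 := by
  have hs0 : 0 < s := lt_trans hr hrs
  have h1s : 0 < 1 - s := by linarith
  have h1r : 0 < 1 - r := by linarith
  have hγr : 0 < γ * r := by positivity
  have hγ1s : 0 < γ * (1 - s) := by positivity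
  have hγs : 0 < γ * s := by positivity
  have hγ1r : 0 < γ * (1 - r) := by positivity
  have g1 := gpos hγr
  have g2 := gpos hγ1s
  have g3 := gpos hγs
  have g4 := gpos hγ1r
  have h1 := L3 hγr (by nlinarith : γ * r ≤ γ * s)
  have h2 := L3 hγ1s (by nlinarith : γ * (1 - s) ≤ γ * (1 - r))
  rw [div_pow, div_le_div_iff₀ (by positivity) (by positivity)]
  have key := mul_le_mul h1 h2 (by positivity) (by positivity)
  nlinarith [pow_pos hγ 4, key, mul_pos g3 g4, sq_nonneg (s * (1 - r)), sq_nonneg (r * (1 - s))]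
end
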